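/- Let q : ℝ → [0,∞) be continuous with ∫_{-∞}^x q > 0, ∫_x^∞ q > 0 for all x, and let d(x) be the unique solution of ∫_0^{√2 d(x)} ∫_{x-t}^{x+t} q(ξ) dξ dt = 2. Then d is continuously differentiable and |d'(x)| ≤ 1/√2 for all x ∈ ℝ. -/

import Mathlib

open MeasureTheory
open intervalIntegral

namespace S19
variable {q : ℝ → ℝ}

noncomputable def Q (q : ℝ → ℝ) (x : ℝ) : ℝ := ∫ t in (0:ℝ)..x, q t

lemma hQ (hqc : Continuous q) (y : ℝ) : HasStrictDerivAt (Q q) (q y) y :=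
  hqc.integral_hasStrictDerivAt 0 y

lemma Qcont (hqc : Continuous q) : Continuous (Q q) := by
  have : Differentiable ℝ (Q q) := fun y => ((hQ hqc y).hasDerivAt).differentiableAt
  exact this.continuous

lemma Qmono (hqc : Continuous q) (hqnn : ∀ x, 0 ≤ q x) : Monotone (Q q) := by
  have hd : Differentiable ℝ (Q q) := fun y => ((hQ hqc y).hasDerivAt).differentiableAt
  refine monotone_of_deriv_nonneg hd ?_
  intro x
  rw [(hQ hqc x).hasDerivAt.deriv]
  exact hqnn x

noncomputable def P (q : ℝ → ℝ) (x : ℝ) : ℝ := ∫ t in (0:ℝ)..x, Q q t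

lemma hP (hqc : Continuous q) (y : ℝ) : HasStrictDerivAt (P q) (Q q y) y :=
  (Qcont hqc).integral_hasStrictDerivAt 0 y

lemma Pcont (hqc : Continuous q) : Continuous (P q) := by
  have : Differentiable ℝ (P q) := fun y => ((hP hqc y).hasDerivAt).differentiableAt
  exact this.continuous

lemma integral_q (hqc : Continuous q) (a b : ℝ) : (∫ ξ in a..b, q ξ) = Q q b - Q q a := by
  have h := integral_add_adjacent_intervals (μ := volume) (hqc.intervalIntegrable 0 a) (hqc.intervalIntegrable a b)
  unfold Q; linarith

lemma integral_Q (hqc : Continuous q) (a b : ℝ) : (∫ ξ in a..b, Q q ξ) = P q b - P q a := by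
  have h := integral_add_adjacent_intervals (μ := volume) ((Qcont hqc).intervalIntegrable 0 a) ((Qcont hqc).intervalIntegrable a b)
  unfold P; linarith

noncomputable def H (q : ℝ → ℝ) (x r : ℝ) : ℝ := P q (x + r) + P q (x - r) - 2 * P q x

lemma Hval' (hqc : Continuous q) (x r : ℝ) :
    (∫ t in (0:ℝ)..r, (Q q (x + t) - Q q (x - t))) = H q x r := by
  have h1 : (∫ t in (0:ℝ)..r, (Q q (x + t) - Q q (x - t)))
      = (∫ t in (0:ℝ)..r, Q q (x + t)) - ∫ t in (0:ℝ)..r, Q q (x - t) := by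
    apply intervalIntegral.integral_sub
    · exact ((Qcont hqc).comp (continuous_const.add continuous_id)).intervalIntegrable 0 r
    · exact ((Qcont hqc).comp (continuous_const.sub continuous_id)).intervalIntegrable 0 r
  rw [h1, integral_comp_add_left (Q q) x, integral_comp_sub_left (Q q) x]
  rw [integral_Q hqc, integral_Q hqc]
  unfold H
  simp only [add_zero, sub_zero]
  ring

lemma Hval (hqc : Continuous q) (x r : ℝ) :
    (∫ t in (0:ℝ)..r, ∫ ξ in (x - t)..(x + t), q ξ) = H q x r := by
  rw [← Hval' hqc]
  apply integral_congr
  intro t _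
  exact integral_q hqc _ _


lemma HderivR (hqc : Continuous q) (x r : ℝ) :
    HasDerivAt (fun r => H q x r) (Q q (x + r) - Q q (x - r)) r := by
  have h1 : HasDerivAt (fun r : ℝ => P q (x + r)) (Q q (x + r) * 1) r :=
    (hP hqc (x + r)).hasDerivAt.comp r ((hasDerivAt_id r).const_add x)
  have h2 : HasDerivAt (fun r : ℝ => P q (x - r)) (Q q (x - r) * (-1)) r :=
    (hP hqc (x - r)).hasDerivAt.comp r ((hasDerivAt_id r).const_sub x)
  have := (h1.add h2).sub (hasDerivAt_const r (2 * P q x))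
  refine this.congr_deriv ?_
  ring

lemma Hmono (hqc : Continuous q) (hqnn : ∀ x, 0 ≤ q x) (x : ℝ) :
    MonotoneOn (fun r => H q x r) (Set.Ici 0) := by
  have hdiff : ∀ r : ℝ, DifferentiableAt ℝ (fun r => H q x r) r :=
    fun r => (HderivR hqc x r).differentiableAt
  refine monotoneOn_of_deriv_nonneg (convex_Ici 0)
    ((Differentiable.continuous hdiff).continuousOn) (fun r _ => (hdiff r).differentiableWithinAt) ?_
  intro r hr
  rw [interior_Ici] at hr
  rw [(HderivR hqc x r).deriv]
  have : x - r ≤ x + r := by linarith [le_of_lt (Set.mem_Ioi.mp hr)]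
  linarith [Qmono hqc hqnn this]

lemma a_pos (hqc : Continuous q) (hqnn : ∀ x, 0 ≤ q x) {x r : ℝ} (hr : 0 < r)
    (hH : H q x r = 2) : 0 < Q q (x + r) - Q q (x - r) := by
  rcases lt_or_ge 0 (Q q (x + r) - Q q (x - r)) with h | h
  · exact h
  exfalso
  have hle : x - r ≤ x + r := by linarith
  have heq : Q q (x - r) = Q q (x + r) := le_antisymm (Qmono hqc hqnn hle) (by linarith)
  have hz : (∫ t in (0:ℝ)..r, (Q q (x + t) - Q q (x - t))) = ∫ t in (0:ℝ)..r, (0:ℝ) := by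
    apply integral_congr
    intro t ht
    rw [Set.uIcc_of_le hr.le] at ht
    have h1 : Q q (x + t) ≤ Q q (x + r) := Qmono hqc hqnn (by linarith [ht.2])
    have h2 : Q q (x - r) ≤ Q q (x - t) := Qmono hqc hqnn (by linarith [ht.2])
    have h3 : Q q (x - t) ≤ Q q (x + t) := Qmono hqc hqnn (by linarith [ht.1])
    show Q q (x + t) - Q q (x - t) = 0
    linarith
  simp only [intervalIntegral.integral_const, smul_zero] at hz
  rw [Hval' hqc, hH] at hz
  norm_num at hz


lemma Hcontx (hqc : Continuous q) (r : ℝ) : Continuous (fun x => H q x r) := by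
  unfold H
  exact (((Pcont hqc).comp (continuous_id.add continuous_const)).add
    ((Pcont hqc).comp (continuous_id.sub continuous_const))).sub
    (continuous_const.mul (Pcont hqc))

lemma s_cont (hqc : Continuous q) (hqnn : ∀ x, 0 ≤ q x) {s : ℝ → ℝ}
    (hs : ∀ x, 0 < s x) (hHs : ∀ x, H q x (s x) = 2) : Continuous s := by
  rw [continuous_iff_continuousAt]
  intro x₀
  rw [ContinuousAt, Metric.tendsto_nhds]
  intro ε hε
  set r₀ := s x₀ with hr₀
  set g : ℝ → ℝ := fun r => Q q (x₀ + r) - Q q (x₀ - r) with hg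
  have ha : 0 < g r₀ := a_pos hqc hqnn (hs x₀) (hHs x₀)
  have hgmono : Monotone g := by
    intro r r' hr
    have h1 : Q q (x₀ + r) ≤ Q q (x₀ + r') := Qmono hqc hqnn (by linarith)
    have h2 : Q q (x₀ - r') ≤ Q q (x₀ - r) := Qmono hqc hqnn (by linarith)
    simp only [hg]; linarith
  have hgcont : Continuous g :=
    ((Qcont hqc).comp (continuous_const.add continuous_id)).sub
      ((Qcont hqc).comp (continuous_const.sub continuous_id))
  -- choose ε' > 0, ε' < min ε r₀, with g (r₀ - ε') > 0
  have hev : ∀ᶠ t in nhds r₀, 0 < g t :=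
    ContinuousAt.eventually_lt continuousAt_const (hgcont.continuousAt) ha
  obtain ⟨δ, hδpos, hδ⟩ := Metric.eventually_nhds_iff_ball.mp hev
  set ε' : ℝ := min (δ / 2) (min ε r₀ / 2) with hε'
  have hε'pos : 0 < ε' := by
    have := hs x₀
    apply lt_min (by linarith) (by positivity)
  have hε'ε : ε' < ε := by
    have h := min_le_right (δ / 2) (min ε r₀ / 2)
    have h2 := min_le_left ε r₀
    have : min ε r₀ / 2 < ε := by linarith
    linarith
  have hε'r₀ : ε' < r₀ := by
    have h := min_le_right (δ / 2) (min ε r₀ / 2)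
    have h2 := min_le_right ε r₀
    linarith
  have hgpos : 0 < g (r₀ - ε') := by
    apply hδ
    rw [Metric.mem_ball, Real.dist_eq]
    have h := min_le_left (δ / 2) (min ε r₀ / 2)
    rw [abs_sub_comm, abs_of_nonneg (by linarith : (0:ℝ) ≤ r₀ - (r₀ - ε'))]
    linarith
  -- strict monotonicity of H q x₀ on [r₀ - ε', r₀ + ε']
  have hsm : StrictMonoOn (fun r => H q x₀ r) (Set.Icc (r₀ - ε') (r₀ + ε')) := by
    apply strictMonoOn_of_deriv_pos (convex_Icc _ _)
    · exact Continuous.continuousOn (by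
        have : Differentiable ℝ (fun r => H q x₀ r) := fun r => (HderivR hqc x₀ r).differentiableAt
        exact this.continuous)
    · intro r hr
      rw [interior_Icc] at hr
      rw [(HderivR hqc x₀ r).deriv]
      exact lt_of_lt_of_le hgpos (hgmono hr.1.le)
  have hmem1 : r₀ - ε' ∈ Set.Icc (r₀ - ε') (r₀ + ε') := by
    constructor <;> [exact le_refl _; linarith]
  have hmem2 : r₀ ∈ Set.Icc (r₀ - ε') (r₀ + ε') := by
    constructor <;> linarith
  have hmem3 : r₀ + ε' ∈ Set.Icc (r₀ - ε') (r₀ + ε') := by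
    constructor <;> linarith
  have h2eq : H q x₀ r₀ = 2 := hHs x₀
  have h1 : H q x₀ (r₀ - ε') < 2 := by
    have : H q x₀ (r₀ - ε') < H q x₀ r₀ := hsm hmem1 hmem2 (by linarith)
    rwa [h2eq] at this
  have h2 : 2 < H q x₀ (r₀ + ε') := by
    have : H q x₀ r₀ < H q x₀ (r₀ + ε') := hsm hmem2 hmem3 (by linarith)
    rwa [h2eq] at this
  -- continuity in x
  have hopen1 : ∀ᶠ x in nhds x₀, H q x (r₀ - ε') < 2 :=
    ContinuousAt.eventually_lt ((Hcontx hqc (r₀ - ε')).continuousAt) continuousAt_const h1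
  have hopen2 : ∀ᶠ x in nhds x₀, 2 < H q x (r₀ + ε') :=
    ContinuousAt.eventually_lt continuousAt_const ((Hcontx hqc (r₀ + ε')).continuousAt) h2
  filter_upwards [hopen1, hopen2] with x hx1 hx2
  rw [Real.dist_eq, abs_lt]
  have hlow : r₀ - ε' < s x := by
    by_contra hcon
    push_neg at hcon
    have : H q x (s x) ≤ H q x (r₀ - ε') := Hmono hqc hqnn x (Set.mem_Ici.mpr (hs x).le)
      (Set.mem_Ici.mpr (by linarith : (0:ℝ) ≤ r₀ - ε')) hcon
    rw [hHs x] at this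
    exact absurd (lt_of_le_of_lt this hx1) (lt_irrefl 2)
  have hhigh : s x < r₀ + ε' := by
    by_contra hcon
    push_neg at hcon
    have : H q x (r₀ + ε') ≤ H q x (s x) := Hmono hqc hqnn x
      (Set.mem_Ici.mpr (by linarith : (0:ℝ) ≤ r₀ + ε')) (Set.mem_Ici.mpr (hs x).le) hcon
    rw [hHs x] at this
    exact absurd (lt_of_lt_of_le hx2 this) (lt_irrefl 2)
  constructor <;> linarith


open ContinuousLinearMap in
lemma Hstrict (hqc : Continuous q) (p : ℝ × ℝ) :
    HasStrictFDerivAt (fun p : ℝ × ℝ => H q p.1 p.2)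
      ((fst ℝ ℝ ℝ).smulRight (Q q (p.1 + p.2) + Q q (p.1 - p.2) - 2 * Q q p.1)
        + (snd ℝ ℝ ℝ).smulRight (Q q (p.1 + p.2) - Q q (p.1 - p.2))) p := by
  have hA : HasStrictFDerivAt (fun p : ℝ × ℝ => p.1 + p.2)
      (fst ℝ ℝ ℝ + snd ℝ ℝ ℝ) p := hasStrictFDerivAt_fst.add hasStrictFDerivAt_snd
  have hB : HasStrictFDerivAt (fun p : ℝ × ℝ => p.1 - p.2)
      (fst ℝ ℝ ℝ - snd ℝ ℝ ℝ) p := hasStrictFDerivAt_fst.sub hasStrictFDerivAt_snd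
  have h1 : HasStrictFDerivAt (fun p : ℝ × ℝ => P q (p.1 + p.2))
      (Q q (p.1 + p.2) • (fst ℝ ℝ ℝ + snd ℝ ℝ ℝ)) p :=
    by have := (hP hqc (p.1 + p.2)).comp_hasStrictFDerivAt p hA; exact this
  have h2 : HasStrictFDerivAt (fun p : ℝ × ℝ => P q (p.1 - p.2))
      (Q q (p.1 - p.2) • (fst ℝ ℝ ℝ - snd ℝ ℝ ℝ)) p :=
    by have := (hP hqc (p.1 - p.2)).comp_hasStrictFDerivAt p hB; exact this
  have h3 : HasStrictFDerivAt (fun p : ℝ × ℝ => 2 * P q p.1)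
      ((2 * Q q p.1) • (fst ℝ ℝ ℝ)) p := by
    have := ((hP hqc p.1).const_mul 2).comp_hasStrictFDerivAt p
      (hasStrictFDerivAt_fst (p := p) (𝕜 := ℝ))
    exact this
  have := (h1.add h2).sub h3
  refine this.congr_fderiv ?_
  refine ContinuousLinearMap.ext fun v => ?_
  simp
  ring

open ContinuousLinearMap in
noncomputable def shear (b a : ℝ) (ha : a ≠ 0) : (ℝ × ℝ) ≃L[ℝ] (ℝ × ℝ) :=
  ContinuousLinearEquiv.equivOfInverse
    ((fst ℝ ℝ ℝ).prod ((fst ℝ ℝ ℝ).smulRight b + (snd ℝ ℝ ℝ).smulRight a))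
    ((fst ℝ ℝ ℝ).prod ((fst ℝ ℝ ℝ).smulRight (-b / a) + (snd ℝ ℝ ℝ).smulRight a⁻¹))
    (by
      intro p
      refine Prod.ext (by simp) ?_
      simp
      field_simp
      ring)
    (by
      intro p
      refine Prod.ext (by simp) ?_
      simp
      field_simp
      ring)


lemma s_diffAt (hqc : Continuous q) (hqnn : ∀ x, 0 ≤ q x) {s : ℝ → ℝ}
    (hs : ∀ x, 0 < s x) (hHs : ∀ x, H q x (s x) = 2) (x₀ : ℝ) :
    DifferentiableAt ℝ s x₀ := by
  set r₀ := s x₀ with hr₀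
  set bb := Q q (x₀ + r₀) + Q q (x₀ - r₀) - 2 * Q q x₀ with hbb
  set aa := Q q (x₀ + r₀) - Q q (x₀ - r₀) with haa
  have ha : 0 < aa := a_pos hqc hqnn (hs x₀) (hHs x₀)
  set f : ℝ × ℝ → ℝ × ℝ := fun p => (p.1, H q p.1 p.2) with hfdef
  have hf : HasStrictFDerivAt f (shear bb aa ha.ne' : (ℝ × ℝ) →L[ℝ] (ℝ × ℝ)) (x₀, r₀) := by
    have h2 := (hasStrictFDerivAt_fst (𝕜 := ℝ) (p := ((x₀, r₀) : ℝ × ℝ))).prodMk (Hstrict hqc (x₀, r₀))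
    exact h2
  have hf2 : f (x₀, r₀) = (x₀, 2) := by
    simp only [hfdef, hr₀]
    rw [hHs x₀]
  set g := hf.localInverse f _ _ with hgdef
  have htend : Filter.Tendsto (fun x => ((x, s x) : ℝ × ℝ)) (nhds x₀) (nhds (x₀, r₀)) := by
    rw [hr₀]
    exact (continuous_id.prodMk (s_cont hqc hqnn hs hHs)).continuousAt
  have hev2 : ∀ᶠ x in nhds x₀, g (f (x, s x)) = (x, s x) :=
    htend.eventually hf.eventually_left_inverse
  have heq : ∀ᶠ x in nhds x₀, s x = (g (x, 2)).2 := by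
    filter_upwards [hev2] with x hx
    have : f (x, s x) = (x, 2) := by
      simp only [hfdef]
      rw [hHs x]
    rw [this] at hx
    rw [hx]
  have hgd : DifferentiableAt ℝ g (x₀, 2) := by
    have := hf.to_localInverse.differentiableAt
    rwa [hf2] at this
  have hpair : DifferentiableAt ℝ (fun x : ℝ => ((x, 2) : ℝ × ℝ)) x₀ :=
    differentiableAt_id.prodMk (differentiableAt_const 2)
  have hcomp : DifferentiableAt ℝ (fun x => (g (x, 2)).2) x₀ :=
    (differentiable_snd.differentiableAt).comp x₀ (hgd.comp x₀ hpair)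
  exact hcomp.congr_of_eventuallyEq heq


lemma s_deriv (hqc : Continuous q) (hqnn : ∀ x, 0 ≤ q x) {s : ℝ → ℝ}
    (hs : ∀ x, 0 < s x) (hHs : ∀ x, H q x (s x) = 2) (x₀ : ℝ) :
    Q q (x₀ + s x₀) + Q q (x₀ - s x₀) - 2 * Q q x₀
      + (Q q (x₀ + s x₀) - Q q (x₀ - s x₀)) * deriv s x₀ = 0 := by
  set c := deriv s x₀ with hc
  have hds : HasDerivAt s c x₀ := (s_diffAt hqc hqnn hs hHs x₀).hasDerivAt
  have hin1 : HasDerivAt (fun x => x + s x) (1 + c) x₀ := (hasDerivAt_id x₀).add hds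
  have hin2 : HasDerivAt (fun x => x - s x) (1 - c) x₀ := (hasDerivAt_id x₀).sub hds
  have h1 : HasDerivAt (fun x => P q (x + s x)) (Q q (x₀ + s x₀) * (1 + c)) x₀ :=
    by have := (hP hqc (x₀ + s x₀)).hasDerivAt.comp x₀ hin1; exact this
  have h2 : HasDerivAt (fun x => P q (x - s x)) (Q q (x₀ - s x₀) * (1 - c)) x₀ :=
    by have := (hP hqc (x₀ - s x₀)).hasDerivAt.comp x₀ hin2; exact this
  have h3 : HasDerivAt (fun x => 2 * P q x) (2 * Q q x₀) x₀ := by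
    simpa [mul_comm] using (hP hqc x₀).hasDerivAt.const_mul 2
  have hsum : HasDerivAt (fun x => P q (x + s x) + P q (x - s x) - 2 * P q x)
      (Q q (x₀ + s x₀) * (1 + c) + Q q (x₀ - s x₀) * (1 - c) - 2 * Q q x₀) x₀ :=
    (h1.add h2).sub h3
  have hfun : (fun x => P q (x + s x) + P q (x - s x) - 2 * P q x) = fun _ => (2:ℝ) := by
    funext x
    exact hHs x
  rw [hfun] at hsum
  have := hsum.unique (hasDerivAt_const x₀ 2)
  linarith [this]

end S19

open S19 in
theorem stmt_19 (q : ℝ → ℝ) (hqc : Continuous q) (hqnn : ∀ x, 0 ≤ q x)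
    (hleft : ∀ x : ℝ, 0 < ∫⁻ t in Set.Iic x, ENNReal.ofReal (q t))
    (hright : ∀ x : ℝ, 0 < ∫⁻ t in Set.Ici x, ENNReal.ofReal (q t))
    (d : ℝ → ℝ) (hdpos : ∀ x, 0 < d x)
    (hd : ∀ x, (∫ t in (0:ℝ)..(Real.sqrt 2 * d x), ∫ ξ in (x - t)..(x + t), q ξ) = 2) :
    ContDiff ℝ 1 d ∧ ∀ x, |deriv d x| ≤ 1 / Real.sqrt 2 := by
  have hsqrt : (0:ℝ) < Real.sqrt 2 := Real.sqrt_pos.mpr two_pos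
  set s : ℝ → ℝ := fun x => Real.sqrt 2 * d x with hsdef
  have hs : ∀ x, 0 < s x := fun x => mul_pos hsqrt (hdpos x)
  have hHs : ∀ x, H q x (s x) = 2 := fun x => by rw [← Hval hqc]; exact hd x
  have hsdiff : ∀ x, DifferentiableAt ℝ s x := s_diffAt hqc hqnn hs hHs
  have hscont : Continuous s := s_cont hqc hqnn hs hHs
  set aa : ℝ → ℝ := fun x => Q q (x + s x) - Q q (x - s x) with haadef
  set bb : ℝ → ℝ := fun x => Q q (x + s x) + Q q (x - s x) - 2 * Q q x with hbbdef
  have heq : ∀ x, bb x + aa x * deriv s x = 0 := fun x => s_deriv hqc hqnn hs hHs x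
  have haa : ∀ x, 0 < aa x := fun x => a_pos hqc hqnn (hs x) (hHs x)
  have hderiv_s : ∀ x, deriv s x = -bb x / aa x := by
    intro x
    have h := heq x
    field_simp [(haa x).ne']
    linarith [h]
  have hbb_le : ∀ x, |bb x| ≤ aa x := by
    intro x
    have hA : Q q x ≤ Q q (x + s x) := Qmono hqc hqnn (by linarith [hs x])
    have hB : Q q (x - s x) ≤ Q q x := Qmono hqc hqnn (by linarith [hs x])
    rw [abs_le]
    constructor <;> simp only [haadef, hbbdef] <;> linarith
  have hbound_s : ∀ x, |deriv s x| ≤ 1 := by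
    intro x
    rw [hderiv_s x, abs_div, abs_neg, abs_of_pos (haa x)]
    rw [div_le_one (haa x)]
    exact hbb_le x
  -- d in terms of s
  have hdd : ∀ x, d x = (Real.sqrt 2)⁻¹ * s x := by
    intro x
    rw [hsdef]
    field_simp
  have hddiff : ∀ x, DifferentiableAt ℝ d x := by
    intro x
    have : DifferentiableAt ℝ (fun x => (Real.sqrt 2)⁻¹ * s x) x := (hsdiff x).const_mul _
    exact this.congr_of_eventuallyEq (Filter.Eventually.of_forall hdd)
  have hderiv_d : ∀ x, deriv d x = (Real.sqrt 2)⁻¹ * deriv s x := by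
    intro x
    have h1 : deriv d x = deriv (fun x => (Real.sqrt 2)⁻¹ * s x) x := by
      apply Filter.EventuallyEq.deriv_eq
      exact Filter.Eventually.of_forall hdd
    rw [h1, deriv_const_mul _ (hsdiff x)]
  have hderivs_cont : Continuous (deriv s) := by
    have : deriv s = fun x => -bb x / aa x := funext hderiv_s
    rw [this]
    have hca : Continuous aa :=
      ((Qcont hqc).comp (continuous_id.add hscont)).sub ((Qcont hqc).comp (continuous_id.sub hscont))
    have hcb : Continuous bb :=
      (((Qcont hqc).comp (continuous_id.add hscont)).add
        ((Qcont hqc).comp (continuous_id.sub hscont))).sub (continuous_const.mul (Qcont hqc))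
    exact hcb.neg.div hca (fun x => (haa x).ne')
  have hderivd_cont : Continuous (deriv d) := by
    have : deriv d = fun x => (Real.sqrt 2)⁻¹ * deriv s x := funext hderiv_d
    rw [this]
    exact continuous_const.mul hderivs_cont
  constructor
  · rw [contDiff_one_iff_deriv]
    exact ⟨fun x => hddiff x, hderivd_cont⟩
  · intro x
    rw [hderiv_d x, abs_mul, abs_of_nonneg (by positivity : (0:ℝ) ≤ (Real.sqrt 2)⁻¹)]
    calc (Real.sqrt 2)⁻¹ * |deriv s x| ≤ (Real.sqrt 2)⁻¹ * 1 := by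
          apply mul_le_mul_of_nonneg_left (hbound_s x) (by positivity)
    _ = 1 / Real.sqrt 2 := by rw [mul_one, one_div]
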